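/- arXiv:2309.03410 — 2 statements merged into one kernel-verified Lean document; each statement's English description precedes it below -/
import Mathlib

section
/- For every positive integer n, every nonnegative integer p, and every t = (t_1,…,t_n) ∈ ℂ^n, the Laguerre polynomial with parameter n satisfies L_p^{(n)}(t_1 + ⋯ + t_n) = Σ_{k ∈ ℕ_0^n, |k| ≤ p} ∏_{r=1}^{n} L_{k_r}(t_r), where L_j = L_j^{(0)} is the ordinary Laguerre polynomial and |k| = k_1 + ⋯ + k_n. -/
open Finset

/-- Generalized binomial coefficient `C(n+α, n-j)`. -/
noncomputable def genBinom (α : ℝ) (n j : ℕ) : ℝ :=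
  (∏ i ∈ Finset.range (n - j), ((n : ℝ) + α - i)) / (Nat.factorial (n - j))

/-- Generalized Laguerre polynomial `L_n^{(α)}(x) = ∑_{j=0}^n (-1)^j C(n+α, n-j) x^j / j!`. -/
noncomputable def genLaguerre (α : ℝ) (n : ℕ) (x : ℂ) : ℂ :=
  ∑ j ∈ Finset.range (n + 1),
    (-1) ^ j * ((genBinom α n j : ℝ) : ℂ) * x ^ j / (Nat.factorial j)



lemma prod_range_cast_sub (N k : ℕ) : ∏ i ∈ Finset.range k, ((N:ℝ) - i) = (N.descFactorial k : ℝ) := by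
  induction k with
  | zero => simp
  | succ k ih =>
    rw [Finset.prod_range_succ, ih, Nat.descFactorial_succ, Nat.cast_mul]
    by_cases h : k ≤ N
    · have : ((N - k : ℕ) : ℝ) = (N:ℝ) - k := by push_cast [h]; ring
      rw [this]; ring
    · have hlt : N < k := by omega
      have : N.descFactorial k = 0 := Nat.descFactorial_eq_zero_iff_lt.2 hlt
      simp [this, Nat.sub_eq_zero_of_le (le_of_lt hlt)]

lemma genBinom_nat (c n j : ℕ) : genBinom (c:ℝ) n j = ((n + c).choose (n - j) : ℝ) := by
  unfold genBinom
  have h1 : ∀ i : ℕ, (n : ℝ) + c - i = ((n + c : ℕ) : ℝ) - i := by intro i; push_cast; ring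
  simp_rw [h1, prod_range_cast_sub]
  rw [Nat.descFactorial_eq_factorial_mul_choose]
  push_cast
  rw [mul_comm, mul_div_assoc, div_self, mul_one]
  exact_mod_cast Nat.factorial_ne_zero _

lemma vdm (u : ℕ) : ∀ v N : ℕ, ∑ s ∈ Finset.range (N+1), (u+s).choose s * (v + (N - s)).choose (N-s) = (u+v+N+1).choose N := by
  induction u with
  | zero =>
    intro v N
    induction N with
    | zero => simp
    | succ N ihN =>
      rw [Finset.sum_range_succ']
      simp only [Nat.zero_add, Nat.choose_self, one_mul, Nat.succ_sub_succ, Nat.sub_zero] at ihN ⊢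
      rw [ihN, show v+(N+1)+1 = (v+N+1)+1 from by ring, Nat.choose_succ_succ',
        show v+(N+1) = v+N+1 from by ring]
  | succ u ihu =>
    intro v N
    induction N with
    | zero => simp
    | succ N ihN =>
      rw [Finset.sum_range_succ']
      simp only [Nat.succ_sub_succ, Nat.sub_zero, Nat.choose_zero_right, one_mul] at *
      have pascal : ∀ i ∈ Finset.range (N+1), (u+1+(i+1)).choose (i+1) * (v+(N-i)).choose (N-i)
          = (u+1+i).choose i * (v+(N-i)).choose (N-i) + (u+(i+1)).choose (i+1) * (v+(N-i)).choose (N-i) := by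
        intro i _
        rw [show u+1+(i+1) = (u+1+i)+1 from by ring, Nat.choose_succ_succ',
          show u+1+i = u+(i+1) from by ring, add_mul]
      rw [Finset.sum_congr rfl pascal, Finset.sum_add_distrib, ihN]
      have key := ihu v (N+1)
      rw [Finset.sum_range_succ'] at key
      simp only [Nat.succ_sub_succ, Nat.sub_zero, Nat.choose_zero_right, one_mul] at key
      rw [show u+v+(N+1)+1 = u+v+N+2 from by ring] at key
      rw [show u+1+v+(N+1)+1 = (u+v+N+2)+1 from by ring, Nat.choose_succ_succ',
        show u+1+v+N+1 = u+v+N+2 from by ring]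
      omega

lemma reindexA {M : Type*} [AddCommMonoid M] (m : ℕ) (F : ℕ → ℕ → M) :
    ∑ j ∈ range (m+1), ∑ c ∈ range (j+1), F c (j-c)
      = ∑ p ∈ (range (m+1) ×ˢ range (m+1)).filter (fun p => p.1 + p.2 ≤ m), F p.1 p.2 := by
  rw [Finset.sum_sigma']
  refine Finset.sum_nbij' (fun x => (x.2, x.1 - x.2)) (fun p => ⟨p.1 + p.2, p.1⟩) ?_ ?_ ?_ ?_ ?_
  · rintro ⟨j, c⟩ h
    simp only [Finset.mem_sigma, Finset.mem_range, Finset.mem_filter, Finset.mem_product] at h ⊢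
    omega
  · rintro ⟨c, e⟩ h
    simp only [Finset.mem_sigma, Finset.mem_range, Finset.mem_filter, Finset.mem_product] at h ⊢
    omega
  · rintro ⟨j, c⟩ h
    simp only [Finset.mem_sigma, Finset.mem_range] at h
    dsimp only
    rw [show c + (j - c) = j from by omega]
  · rintro ⟨c, e⟩ h
    simp only [Finset.mem_filter, Finset.mem_product, Finset.mem_range] at h
    dsimp only
    rw [show c + e - c = e from by omega]
  · rintro ⟨j, c⟩ h
    rfl

lemma reindexB {M : Type*} [AddCommMonoid M] (m : ℕ) (G : ℕ → ℕ → ℕ → M) :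
    ∑ i ∈ range (m+1), ∑ c ∈ range (i+1), ∑ d ∈ range (m-i+1), G i c d
      = ∑ p ∈ (range (m+1) ×ˢ range (m+1)).filter (fun p => p.1 + p.2 ≤ m),
          ∑ s ∈ range (m - p.1 - p.2 + 1), G (p.1 + s) p.1 p.2 := by
  have h1 : ∀ i ∈ range (m+1), ∑ c ∈ range (i+1), ∑ d ∈ range (m-i+1), G i c d
      = ∑ q ∈ range (i+1) ×ˢ range (m-i+1), G i q.1 q.2 := by
    intro i _
    rw [Finset.sum_product]
  rw [Finset.sum_congr rfl h1, Finset.sum_sigma', Finset.sum_sigma']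
  refine Finset.sum_nbij' (fun x => ⟨(x.2.1, x.2.2), x.1 - x.2.1⟩)
    (fun y => ⟨y.1.1 + y.2, (y.1.1, y.1.2)⟩) ?_ ?_ ?_ ?_ ?_
  · rintro ⟨i, c, d⟩ h
    simp only [Finset.mem_sigma, Finset.mem_range, Finset.mem_filter, Finset.mem_product] at h ⊢
    omega
  · rintro ⟨⟨c, e⟩, s⟩ h
    simp only [Finset.mem_sigma, Finset.mem_range, Finset.mem_filter, Finset.mem_product] at h ⊢
    omega
  · rintro ⟨i, c, d⟩ h
    simp only [Finset.mem_sigma, Finset.mem_range, Finset.mem_product] at h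
    dsimp only
    rw [show c + (i - c) = i from by omega]
  · rintro ⟨⟨c, e⟩, s⟩ h
    dsimp only
    rw [show c + s - c = s from by omega]
  · rintro ⟨i, c, d⟩ h
    simp only [Finset.mem_sigma, Finset.mem_range, Finset.mem_product] at h
    rw [show c + (i - c) = i from by omega]

set_option maxHeartbeats 1000000 in
lemma laguerre_conv (a b m : ℕ) (x y : ℂ) :
    genLaguerre ((a:ℝ) + (b:ℝ) + 1) m (x + y)
      = ∑ i ∈ Finset.range (m+1), genLaguerre (a:ℝ) i x * genLaguerre (b:ℝ) (m-i) y := by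
  calc genLaguerre ((a:ℝ) + (b:ℝ) + 1) m (x + y)
      = ∑ j ∈ range (m+1), ∑ c ∈ range (j+1),
          (fun c e => (-1)^(c+e) * (((m+(a+b+1)).choose (m-(c+e)) : ℕ) : ℂ) * x^c * y^e
            / ((c.factorial : ℂ) * (e.factorial : ℂ))) c (j-c) := by
        dsimp only
        unfold genLaguerre
        refine Finset.sum_congr rfl fun j hj => ?_
        rw [show ((a:ℝ)+(b:ℝ)+1) = ((a+b+1:ℕ):ℝ) from by push_cast; ring, genBinom_nat,
          add_pow, Finset.mul_sum, Finset.sum_div]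
        refine Finset.sum_congr rfl fun c hc => ?_
        simp only [Finset.mem_range] at hj hc
        obtain ⟨e, rfl⟩ : ∃ e, j = c + e := ⟨j - c, by omega⟩
        rw [Nat.add_sub_cancel_left]
        have h1 : ((c+e).choose c) * c.factorial * e.factorial = (c+e).factorial := by
          rw [← Nat.choose_mul_factorial_mul_factorial (Nat.le_add_right c e),
            Nat.add_sub_cancel_left]
        have h1' : (((c+e).choose c : ℕ) : ℂ) * (c.factorial : ℂ) * (e.factorial : ℂ)
            = ((c+e).factorial : ℂ) := by exact_mod_cast congrArg (Nat.cast (R := ℂ)) h1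
        have f1 : (c.factorial : ℂ) ≠ 0 := Nat.cast_ne_zero.2 (Nat.factorial_ne_zero _)
        have f2 : (e.factorial : ℂ) ≠ 0 := Nat.cast_ne_zero.2 (Nat.factorial_ne_zero _)
        have f3 : ((c+e).factorial : ℂ) ≠ 0 := Nat.cast_ne_zero.2 (Nat.factorial_ne_zero _)
        push_cast
        push_cast at h1'
        field_simp
        rw [← h1']
        ring
    _ = ∑ p ∈ (range (m+1) ×ˢ range (m+1)).filter (fun p => p.1 + p.2 ≤ m),
          (fun c e => (-1)^(c+e) * (((m+(a+b+1)).choose (m-(c+e)) : ℕ) : ℂ) * x^c * y^e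
            / ((c.factorial : ℂ) * (e.factorial : ℂ))) p.1 p.2 :=
        reindexA m (fun c e => (-1)^(c+e) * (((m+(a+b+1)).choose (m-(c+e)) : ℕ) : ℂ) * x^c * y^e
            / ((c.factorial : ℂ) * (e.factorial : ℂ)))
    _ = ∑ p ∈ (range (m+1) ×ˢ range (m+1)).filter (fun p => p.1 + p.2 ≤ m),
          ∑ s ∈ range (m - p.1 - p.2 + 1),
          (fun i c d => ((-1)^c * (((i+a).choose (i-c) : ℕ) : ℂ) * x^c / (c.factorial : ℂ))
            * ((-1)^d * (((m-i+b).choose (m-i-d) : ℕ) : ℂ) * y^d / (d.factorial : ℂ)))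
            (p.1 + s) p.1 p.2 := by
        refine Finset.sum_congr rfl ?_
        rintro ⟨c, e⟩ hp
        simp only [Finset.mem_filter, Finset.mem_product, Finset.mem_range] at hp
        dsimp only
        calc (-1:ℂ)^(c+e) * (((m+(a+b+1)).choose (m-(c+e)) : ℕ) : ℂ) * x^c * y^e
              / ((c.factorial : ℂ) * (e.factorial : ℂ))
            = ((-1:ℂ)^(c+e) * x^c * y^e / ((c.factorial : ℂ) * (e.factorial : ℂ)))
              * (((a+c+(b+e)+(m-c-e)+1).choose (m-c-e) : ℕ) : ℂ) := by
              rw [show m - (c+e) = m-c-e from by omega,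
                show a+c+(b+e)+(m-c-e)+1 = m+(a+b+1) from by omega]
              ring
          _ = ((-1:ℂ)^(c+e) * x^c * y^e / ((c.factorial : ℂ) * (e.factorial : ℂ)))
              * (((∑ s ∈ range (m-c-e+1), (a+c+s).choose s * (b+e+(m-c-e-s)).choose (m-c-e-s) : ℕ)) : ℂ) := by
              rw [vdm (a+c) (b+e) (m-c-e)]
          _ = ∑ s ∈ range (m-c-e+1),
              ((-1:ℂ)^(c+e) * x^c * y^e / ((c.factorial : ℂ) * (e.factorial : ℂ)))
              * (((a+c+s).choose s * (b+e+(m-c-e-s)).choose (m-c-e-s) : ℕ) : ℂ) := by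
              rw [Nat.cast_sum, Finset.mul_sum]
          _ = ∑ s ∈ range (m-c-e+1),
              ((-1:ℂ)^c * (((c+s+a).choose (c+s-c) : ℕ) : ℂ) * x^c / (c.factorial : ℂ))
              * ((-1:ℂ)^e * (((m-(c+s)+b).choose (m-(c+s)-e) : ℕ) : ℂ) * y^e / (e.factorial : ℂ)) := by
              refine Finset.sum_congr rfl fun s hs => ?_
              simp only [Finset.mem_range] at hs
              rw [show c+s+a = a+c+s from by omega,
                show c+s-c = s from by omega,
                show m-(c+s)+b = b+e+(m-c-e-s) from by omega,
                show m-(c+s)-e = m-c-e-s from by omega]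
              push_cast [pow_add]
              ring
    _ = ∑ i ∈ range (m+1), ∑ c ∈ range (i+1), ∑ d ∈ range (m-i+1),
          (fun i c d => ((-1)^c * (((i+a).choose (i-c) : ℕ) : ℂ) * x^c / (c.factorial : ℂ))
            * ((-1)^d * (((m-i+b).choose (m-i-d) : ℕ) : ℂ) * y^d / (d.factorial : ℂ))) i c d :=
        (reindexB m (fun i c d => ((-1)^c * (((i+a).choose (i-c) : ℕ) : ℂ) * x^c / (c.factorial : ℂ))
            * ((-1)^d * (((m-i+b).choose (m-i-d) : ℕ) : ℂ) * y^d / (d.factorial : ℂ)))).symm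
    _ = ∑ i ∈ Finset.range (m+1), genLaguerre (a:ℝ) i x * genLaguerre (b:ℝ) (m-i) y := by
        refine Finset.sum_congr rfl fun i hi => ?_
        dsimp only
        unfold genLaguerre
        rw [Finset.sum_mul_sum]
        refine (Finset.sum_congr rfl fun c hc => Finset.sum_congr rfl fun d hd => ?_).symm
        rw [genBinom_nat, genBinom_nat]
        push_cast
        ring

lemma genLaguerre_zero_left (p : ℕ) : genLaguerre ((0:ℕ):ℝ) p 0 = 1 := by
  unfold genLaguerre
  rw [Finset.sum_eq_single 0]
  · rw [genBinom_nat]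
    simp
  · intro j _ hj
    simp [zero_pow hj]
  · intro h
    simp at h

lemma laguerre_aux (n p : ℕ) (t : Fin n → ℂ) :
    genLaguerre (n : ℝ) p (∑ r, t r) =
      ∑ k ∈ (Fintype.piFinset fun _ : Fin n => Finset.range (p + 1)).filter
          (fun k => ∑ r, k r ≤ p),
        ∏ r, genLaguerre 0 (k r) (t r) := by
  induction n generalizing p with
  | zero =>
    have hset : (Fintype.piFinset fun _ : Fin 0 => Finset.range (p + 1)).filter
        (fun k => ∑ r, k r ≤ p) = {fun _ => 0} := by
      ext k
      simp only [Finset.mem_filter, Fintype.mem_piFinset, Finset.mem_singleton]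
      constructor
      · intro _; funext i; exact i.elim0
      · intro _; simp
    rw [hset, Finset.sum_singleton]
    simpa using genLaguerre_zero_left p
  | succ n ih =>
    rw [Fin.sum_univ_castSucc,
      show ((n+1:ℕ):ℝ) = (n:ℝ)+((0:ℕ):ℝ)+1 from by push_cast; ring,
      laguerre_conv n 0 p _ _]
    simp only [Nat.cast_zero]
    calc ∑ i ∈ range (p+1), genLaguerre (n:ℝ) i (∑ r : Fin n, t r.castSucc)
            * genLaguerre 0 (p-i) (t (Fin.last n))
        = ∑ i ∈ range (p+1),
            (∑ k ∈ (Fintype.piFinset fun _ : Fin n => Finset.range (i + 1)).filter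
              (fun k => ∑ r, k r ≤ i), ∏ r, genLaguerre 0 (k r) (t r.castSucc))
            * genLaguerre 0 (p-i) (t (Fin.last n)) := by
          refine Finset.sum_congr rfl fun i _ => ?_
          rw [ih i (fun r => t r.castSucc)]
      _ = ∑ j ∈ range (p+1),
            (∑ k ∈ (Fintype.piFinset fun _ : Fin n => Finset.range ((p-j) + 1)).filter
              (fun k => ∑ r, k r ≤ p-j), ∏ r, genLaguerre 0 (k r) (t r.castSucc))
            * genLaguerre 0 j (t (Fin.last n)) := by
          rw [← Finset.sum_range_reflect]
          refine Finset.sum_congr rfl fun j hj => ?_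
          simp only [Finset.mem_range] at hj
          rw [show p + 1 - 1 - j = p - j from by omega, show p - (p - j) = j from by omega]
      _ = ∑ k ∈ (Fintype.piFinset fun _ : Fin (n+1) => Finset.range (p + 1)).filter
            (fun k => ∑ r, k r ≤ p), ∏ r, genLaguerre 0 (k r) (t r) := by
          simp_rw [Finset.sum_mul]
          rw [Finset.sum_sigma']
          refine Finset.sum_nbij' (fun x => Fin.snoc x.2 x.1) (fun k => ⟨k (Fin.last n), Fin.init k⟩)
            ?_ ?_ ?_ ?_ ?_
          · rintro ⟨j, k⟩ h
            simp only [Finset.mem_sigma, Finset.mem_range, Finset.mem_filter,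
              Fintype.mem_piFinset] at h ⊢
            obtain ⟨hj, ⟨hmem, hsum⟩⟩ := h
            refine ⟨fun r => ?_, ?_⟩
            · refine Fin.lastCases ?_ ?_ r
              · simp [Fin.snoc_last]; omega
              · intro i
                simp only [Fin.snoc_castSucc]
                have := hmem i
                omega
            · rw [Fin.sum_univ_castSucc]
              simp only [Fin.snoc_castSucc, Fin.snoc_last]
              omega
          · intro k h
            simp only [Finset.mem_sigma, Finset.mem_range, Finset.mem_filter,
              Fintype.mem_piFinset, Fin.init] at h ⊢
            obtain ⟨hmem, hsum⟩ := h
            rw [Fin.sum_univ_castSucc] at hsum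
            have h1 : ∀ i : Fin n, k i.castSucc ≤ ∑ r : Fin n, k r.castSucc := fun i =>
              Finset.single_le_sum (f := fun r : Fin n => k r.castSucc)
                (fun r _ => Nat.zero_le _) (Finset.mem_univ i)
            refine ⟨by omega, fun i => ?_, by omega⟩
            have := h1 i
            omega
          · rintro ⟨j, k⟩ h
            simp only [Fin.init_snoc, Fin.snoc_last]
          · intro k h
            simp only [Fin.snoc_init_self]
          · rintro ⟨j, k⟩ h
            dsimp only
            rw [Fin.prod_univ_castSucc]
            simp only [Fin.snoc_castSucc, Fin.snoc_last]

/-- Decomposition of the generalized Laguerre polynomial `L_p^{(n)}` of a sum of `n`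
variables into a sum of products of ordinary Laguerre polynomials `L_j = L_j^{(0)}`
over multiindices `k ∈ ℕ₀ⁿ` with `|k| ≤ p`. -/
theorem laguerre_multiindex_decomposition (n : ℕ) (hn : 0 < n) (p : ℕ) (t : Fin n → ℂ) :
    genLaguerre (n : ℝ) p (∑ r, t r) =
      ∑ k ∈ (Fintype.piFinset fun _ : Fin n => Finset.range (p + 1)).filter
          (fun k => ∑ r, k r ≤ p),
        ∏ r, genLaguerre 0 (k r) (t r) :=
  laguerre_aux n p t
end

section
/- For all z, w ∈ ℂ^n and α > 0, the kernel e^{α⟨w,z⟩} L_{m-1}^{(n)}(α|w-z|²) equals the sum Σ_{k ∈ ℕ_0^n, |k| ≤ m-1} ∏_{r=1}^{n} e^{α w_r conj(z_r)} L_{k_r}(α|w_r - z_r|²), where L_j is the ordinary Laguerre polynomial. -/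
open Finset

lemma hockey (p N : ℕ) : ∑ j ∈ range (N+1), j.choose p = (N+1).choose (p+1) := by
  induction N with
  | zero => cases p <;> simp [Nat.choose_eq_zero_of_lt]
  | succ N ih => rw [sum_range_succ, ih, Nat.choose_succ_succ (N+1) p, Nat.add_comm]

lemma vand (p q N : ℕ) :
    ∑ j ∈ range (N+1), j.choose p * (N-j).choose q = (N+1).choose (p+q+1) := by
  induction q generalizing N with
  | zero => simpa using hockey p N
  | succ q ihq =>
    induction N with
    | zero => simp [Nat.choose_eq_zero_of_lt]
    | succ N ihN =>
      rw [sum_range_succ]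
      have h1 : ∀ j ∈ range (N+1), j.choose p * ((N+1-j).choose (q+1))
          = j.choose p * ((N-j).choose q) + j.choose p * ((N-j).choose (q+1)) := by
        intro j hj
        simp only [mem_range] at hj
        have h2 : N+1-j = (N-j)+1 := by omega
        rw [h2, Nat.choose_succ_succ, Nat.mul_add]
      rw [Finset.sum_congr rfl h1, Finset.sum_add_distrib, ihq N, ihN]
      have h3 : p+(q+1)+1 = (p+q+1)+1 := by omega
      rw [h3, Nat.choose_succ_succ (N+1) (p+q+1)]
      simp

lemma vand' (b p q N : ℕ) :
    ∑ j ∈ range (N+1), j.choose p * ((N-j+b).choose (b+q)) = (N+b+1).choose (b+1+p+q) := by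
  have h1 : ∀ j ∈ range (N+1), j.choose p * ((N-j+b).choose (b+q))
      = j.choose p * ((N+b-j).choose (b+q)) := by
    intro j hj; simp only [mem_range] at hj; congr 2; omega
  have h2 : ∑ j ∈ range (N+1), j.choose p * ((N+b-j).choose (b+q))
      = ∑ j ∈ range (N+b+1), j.choose p * ((N+b-j).choose (b+q)) := by
    apply Finset.sum_subset
    · intro j hj; simp only [mem_range] at *; omega
    · intro j hj hj2
      simp only [mem_range] at hj hj2
      rw [show (N+b-j).choose (b+q) = 0 from Nat.choose_eq_zero_of_lt (by omega), mul_zero]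
  rw [Finset.sum_congr rfl h1, h2, vand p (b+q) (N+b)]
  congr 1; omega

lemma genBinom_nat_s9 (b k j : ℕ) (h : j ≤ k) :
    genBinom (b:ℝ) k j = ((k+b).choose (b+j) : ℝ) := by
  have hd : ∀ i ∈ range (k-j), ((k:ℝ) + (b:ℝ) - (i:ℝ)) = (((k+b-i : ℕ)) : ℝ) := by
    intro i hi
    simp only [mem_range] at hi
    rw [Nat.cast_sub (by omega), Nat.cast_add]
  rw [genBinom, Finset.prod_congr rfl hd, ← Nat.cast_prod, ← Nat.descFactorial_eq_prod_range,
    Nat.descFactorial_eq_factorial_mul_choose, Nat.cast_mul,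
    mul_div_cancel_left₀ _ (by positivity : (((k-j).factorial : ℕ) : ℝ) ≠ 0),
    show k - j = (k+b)-(b+j) by omega, Nat.choose_symm (by omega)]

lemma genLaguerre_eq (b k M : ℕ) (h : k ≤ M) (t : ℂ) :
    genLaguerre (b:ℝ) k t
      = ∑ q ∈ range (M+1), (-1)^q * (((k+b).choose (b+q) : ℕ) : ℂ) * t^q / (Nat.factorial q) := by
  rw [genLaguerre,
    Finset.sum_congr rfl (fun q hq => by
      rw [genBinom_nat_s9 b k q (by simpa [Nat.lt_succ_iff] using hq)])]
  apply Finset.sum_subset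
  · intro q hq; simp only [mem_range] at *; omega
  · intro q hq hq2
    simp only [mem_range] at hq hq2
    rw [show (k+b).choose (b+q) = 0 from Nat.choose_eq_zero_of_lt (by omega)]
    simp


lemma triangle_sum (N : ℕ) (f : ℕ → ℕ → ℂ) (hf : ∀ p q, N < p + q → f p q = 0) :
    ∑ s ∈ range (N+1), ∑ p ∈ range (s+1), f p (s-p)
      = ∑ p ∈ range (N+1), ∑ q ∈ range (N+1), f p q := by
  have h1 : ∀ p ∈ range (N+1), ∑ q ∈ range (N+1), f p q = ∑ q ∈ range (N+1-p), f p q := by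
    intro p hp
    simp only [mem_range] at hp
    refine (Finset.sum_subset (by intro q hq; simp only [mem_range] at *; omega) ?_).symm
    intro q hq hq2
    simp only [mem_range] at hq hq2
    exact hf p q (by omega)
  rw [Finset.sum_congr rfl h1, Finset.sum_sigma', Finset.sum_sigma']
  refine Finset.sum_nbij' (fun a : Σ _ : ℕ, ℕ => (⟨a.2, a.1 - a.2⟩ : Σ _ : ℕ, ℕ))
    (fun a : Σ _ : ℕ, ℕ => (⟨a.1 + a.2, a.1⟩ : Σ _ : ℕ, ℕ)) ?_ ?_ ?_ ?_ ?_ <;>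
    rintro ⟨u, v⟩ ha <;> simp only [mem_sigma, mem_range] at ha ⊢
  · omega
  · omega
  · congr 1; omega
  · congr 1; omega

lemma conv (b N : ℕ) (x y : ℂ) :
    ∑ j ∈ range (N+1), genLaguerre ((0:ℕ):ℝ) j x * genLaguerre (b:ℝ) (N-j) y
      = genLaguerre (((b+1):ℕ):ℝ) N (x+y) := by
  set F : ℕ → ℕ → ℂ := fun p q => (-1)^(p+q) * (((N+b+1).choose (b+1+p+q) : ℕ) : ℂ)
      * x^p * y^q / ((p.factorial : ℂ) * (q.factorial : ℂ)) with hF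
  have hL : ∀ j ∈ range (N+1),
      genLaguerre ((0:ℕ):ℝ) j x * genLaguerre (b:ℝ) (N-j) y
        = ∑ p ∈ range (N+1), ∑ q ∈ range (N+1),
            ((j.choose p : ℕ) : ℂ) * (((N-j+b).choose (b+q) : ℕ) : ℂ)
              * ((-1)^(p+q) * x^p * y^q / ((p.factorial : ℂ) * (q.factorial : ℂ))) := by
    intro j hj
    simp only [mem_range] at hj
    rw [genLaguerre_eq 0 j N (by omega) x, genLaguerre_eq b (N-j) N (by omega) y,
      Finset.sum_mul_sum]
    refine Finset.sum_congr rfl fun p hp => Finset.sum_congr rfl fun q hq => ?_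
    simp only [Nat.add_zero, Nat.zero_add]
    rw [pow_add]
    ring
  calc ∑ j ∈ range (N+1), genLaguerre ((0:ℕ):ℝ) j x * genLaguerre (b:ℝ) (N-j) y
      = ∑ p ∈ range (N+1), ∑ q ∈ range (N+1), ∑ j ∈ range (N+1),
          ((j.choose p : ℕ) : ℂ) * (((N-j+b).choose (b+q) : ℕ) : ℂ)
            * ((-1)^(p+q) * x^p * y^q / ((p.factorial : ℂ) * (q.factorial : ℂ))) := by
        rw [Finset.sum_congr rfl hL, Finset.sum_comm]
        exact Finset.sum_congr rfl fun p _ => Finset.sum_comm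
    _ = ∑ p ∈ range (N+1), ∑ q ∈ range (N+1), F p q := by
        refine Finset.sum_congr rfl fun p _ => Finset.sum_congr rfl fun q _ => ?_
        rw [← Finset.sum_mul]
        have hv : (∑ i ∈ range (N+1), ((i.choose p : ℕ) : ℂ) * (((N-i+b).choose (b+q) : ℕ) : ℂ))
            = (((N+b+1).choose (b+1+p+q) : ℕ) : ℂ) := by exact_mod_cast vand' b p q N
        rw [hv]
        simp only [hF]
        ring
    _ = genLaguerre (((b+1):ℕ):ℝ) N (x+y) := by
        rw [genLaguerre_eq (b+1) N N (le_refl N) (x+y), ← triangle_sum N F ?hvan]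
        case hvan =>
          intro p q hpq
          simp only [hF]
          rw [show (N+b+1).choose (b+1+p+q) = 0 from Nat.choose_eq_zero_of_lt (by omega)]
          simp
        refine Finset.sum_congr rfl fun s hs => ?_
        rw [add_pow, Finset.mul_sum, Finset.sum_div]
        refine Finset.sum_congr rfl fun p hp => ?_
        simp only [mem_range] at hs hp
        have hps : p ≤ s := by omega
        have hfac : ((s.factorial : ℂ)) = (s.choose p : ℂ) * p.factorial * (s-p).factorial := by
          exact_mod_cast (Nat.choose_mul_factorial_mul_factorial hps).symm
        simp only [hF]
        rw [show p + (s - p) = s by omega, show b+1+p+(s-p) = b+1+s by omega,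
          show N+(b+1) = N+b+1 by omega, hfac]
        have h1 : (s.choose p : ℂ) ≠ 0 :=
          Nat.cast_ne_zero.mpr (Nat.choose_pos hps).ne'
        have h2 : (p.factorial : ℂ) ≠ 0 := Nat.cast_ne_zero.mpr p.factorial_ne_zero
        have h3 : ((s-p).factorial : ℂ) ≠ 0 := Nat.cast_ne_zero.mpr (s-p).factorial_ne_zero
        field_simp

lemma multi (n : ℕ) (N : ℕ) (x : Fin n → ℂ) :
    ∑ k ∈ (Fintype.piFinset fun _ : Fin n => range (N+1)).filter (fun k => ∑ r, k r ≤ N),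
      ∏ r, genLaguerre ((0:ℕ):ℝ) (k r) (x r) = genLaguerre ((n:ℕ):ℝ) N (∑ r, x r) := by
  induction n generalizing N with
  | zero =>
    have hR : genLaguerre ((0:ℕ):ℝ) N (∑ r : Fin 0, x r) = 1 := by
      rw [Fin.sum_univ_zero, genLaguerre_eq 0 N N (le_refl N),
        Finset.sum_eq_single 0 (fun q _ hq2 => by
          rw [zero_pow hq2]; simp) (by simp)]
      simp
    rw [hR]
    rw [Finset.filter_true_of_mem (fun k _ => by simp)]
    simp
  | succ n ih =>
    have key := Finset.sum_nbij'
      (i := fun k : Fin (n+1) → ℕ => (⟨k 0, Fin.tail k⟩ : Σ _ : ℕ, Fin n → ℕ))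
      (j := fun a : Σ _ : ℕ, Fin n → ℕ => Fin.cons a.1 a.2)
      (s := (Fintype.piFinset fun _ : Fin (n+1) => range (N+1)).filter (fun k => ∑ r, k r ≤ N))
      (t := (range (N+1)).sigma (fun j =>
        (Fintype.piFinset fun _ : Fin n => range (N-j+1)).filter (fun k => ∑ r, k r ≤ N - j)))
      (f := fun k => ∏ r, genLaguerre ((0:ℕ):ℝ) (k r) (x r))
      (g := fun a => ∏ r, genLaguerre ((0:ℕ):ℝ) ((Fin.cons a.1 a.2 : Fin (n+1) → ℕ) r) (x r))
      ?hi ?hj ?left ?right ?h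
    case hi =>
      intro k hk
      simp only [mem_filter, Fintype.mem_piFinset, mem_range, mem_sigma] at hk ⊢
      obtain ⟨h1, h2⟩ := hk
      have hsum : k 0 + ∑ r : Fin n, Fin.tail k r = ∑ r, k r := (Fin.sum_univ_succ k).symm
      refine ⟨by exact h1 0, ⟨fun r => ?_, by omega⟩⟩
      have : Fin.tail k r ≤ ∑ r : Fin n, Fin.tail k r :=
        Finset.single_le_sum (fun i _ => Nat.zero_le _) (mem_univ r)
      omega
    case hj =>
      rintro ⟨j, k⟩ ha
      simp only [mem_filter, Fintype.mem_piFinset, mem_range, mem_sigma] at ha ⊢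
      obtain ⟨h1, h2, h3⟩ := ha
      constructor
      · intro r
        refine Fin.cases ?_ (fun i => ?_) r
        · simpa using h1
        · simp only [Fin.cons_succ]
          exact lt_of_lt_of_le (h2 i) (by omega)
      · rw [Fin.sum_cons]; omega
    case left => intro k _; simp [Fin.cons_self_tail]
    case right => rintro ⟨j, k⟩ _; simp [Fin.tail_cons]
    case h => intro k _; simp only []; rw [Fin.cons_self_tail]
    rw [key, Finset.sum_sigma]
    have hinner : ∀ j ∈ range (N+1),
        (∑ k ∈ (Fintype.piFinset fun _ : Fin n => range (N-j+1)).filter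
            (fun k => ∑ r, k r ≤ N - j),
          ∏ r, genLaguerre ((0:ℕ):ℝ) ((Fin.cons j k : Fin (n+1) → ℕ) r) (x r))
        = genLaguerre ((0:ℕ):ℝ) j (x 0)
            * genLaguerre ((n:ℕ):ℝ) (N-j) (∑ r : Fin n, x r.succ) := by
      intro j _
      rw [← ih (N-j) (fun r => x r.succ), Finset.mul_sum]
      refine Finset.sum_congr rfl fun k _ => ?_
      rw [Fin.prod_univ_succ]
      simp [Fin.cons_zero, Fin.cons_succ]
    rw [Finset.sum_congr rfl hinner, conv n N (x 0) (∑ r : Fin n, x r.succ),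
      ← Fin.sum_univ_succ]


open ComplexConjugate in
/-- Decomposition of the kernel `e^{α⟨w,z⟩} L_{m-1}^{(n)}(α|w-z|²)` into a sum over
multiindices `k` with `|k| ≤ m-1` of products of one-dimensional factors involving
ordinary Laguerre polynomials `L_j = L_j^{(0)}`. -/
theorem kernel_decomposition (n m : ℕ) (hn : 0 < n) (hm : 0 < m) (α : ℝ) (hα : 0 < α)
    (z w : Fin n → ℂ) :
    Complex.exp ((α : ℂ) * ∑ r, w r * conj (z r)) *
        genLaguerre (n : ℝ) (m - 1) ((α : ℂ) * ((∑ r, ‖w r - z r‖ ^ 2 : ℝ) : ℂ))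
      = ∑ k ∈ (Fintype.piFinset fun _ : Fin n => Finset.range m).filter
            (fun k => ∑ r, k r ≤ m - 1),
          ∏ r, Complex.exp ((α : ℂ) * w r * conj (z r)) *
            genLaguerre 0 (k r) ((α : ℂ) * ((‖w r - z r‖ ^ 2 : ℝ) : ℂ)) := by
  obtain ⟨N, rfl⟩ : ∃ N, m = N + 1 := ⟨m - 1, (Nat.succ_pred_eq_of_pos hm).symm⟩
  simp only [Nat.add_sub_cancel]
  have hprod : ∀ k : Fin n → ℕ,
      (∏ r, Complex.exp ((α:ℂ) * w r * conj (z r)) *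
        genLaguerre 0 (k r) ((α:ℂ) * ((‖w r - z r‖ ^ 2 : ℝ) : ℂ)))
      = Complex.exp ((α:ℂ) * ∑ r, w r * conj (z r)) *
        ∏ r, genLaguerre ((0:ℕ):ℝ) (k r) ((α:ℂ) * ((‖w r - z r‖ ^ 2 : ℝ) : ℂ)) := by
    intro k
    rw [Finset.prod_mul_distrib, ← Complex.exp_sum]
    congr 1
    · congr 1
      rw [Finset.mul_sum]
      exact Finset.sum_congr rfl fun r _ => by ring
    · norm_num
  rw [Finset.sum_congr rfl (fun k _ => hprod k), ← Finset.mul_sum,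
    multi n N (fun r => (α:ℂ) * ((‖w r - z r‖ ^ 2 : ℝ) : ℂ))]
  congr 2
  push_cast [Finset.mul_sum]
  ring
end
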